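/- Let $p(s,x)$ be a joint probability mass function on finite sets $\mathcal{S} \times \mathcal{X}$ with $p(s,x) > 0$ for all pairs. Define $g(W) = \sum_{s \in \mathcal{S}} \sum_{x \in W} p(s,x) \log \frac{p(s,x)}{p(s,W)}$ where $p(s,W) = \sum_{x \in W} p(s,x)$ (and $g(\emptyset)=0$). Then $g$ is submodular and nonincreasing: $g(A)+g(B) \geq g(A\cup B) + g(A\cap B)$ for all $A,B \subseteq \mathcal{X}$, and $g(W) \leq g(Y)$ whenever $Y \subseteq W$. -/

import Mathlib

open Finset

/-- The set function `g(W) = ∑_s ∑_{x ∈ W} p(s,x) log (p(s,x) / p(s,W))`. -/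
noncomputable def gset {S X : Type*} [Fintype S] [DecidableEq X] (p : S → X → ℝ)
    (W : Finset X) : ℝ :=
  ∑ s, ∑ x ∈ W, p s x * Real.log (p s x / ∑ y ∈ W, p s y)

lemma mul_log_submod {a b c d : ℝ} (ha : 0 ≤ a) (hab : a ≤ b) (hac : a ≤ c)
    (h : a + d = b + c) :
    b * Real.log b + c * Real.log c ≤ a * Real.log a + d * Real.log d := by
  have hbd : b ≤ d := by linarith
  rcases eq_or_lt_of_le (hab.trans hbd) with he | had
  · have hb : b = a := by linarith
    have hc : c = a := by linarith
    have hd : d = a := by linarith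
    rw [hb, hc, hd]
  · set μ := (d - b)/(d - a) with hμ
    have hd0 : (0:ℝ) < d - a := by linarith
    have hμ0 : 0 ≤ μ := div_nonneg (by linarith) hd0.le
    have hμ1 : μ ≤ 1 := by rw [hμ, div_le_one hd0]; linarith
    have hb : b = μ * a + (1 - μ) * d := by rw [hμ]; field_simp [hd0.ne']; ring
    have hc : c = (1 - μ) * a + μ * d := by field_simp [hμ]; ring_nf; nlinarith
    have cv := Real.convexOn_mul_log
    have h1 := cv.2 (Set.mem_Ici.2 ha) (Set.mem_Ici.2 (by linarith : (0:ℝ) ≤ d))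
      hμ0 (by linarith : (0:ℝ) ≤ 1 - μ) (by ring)
    have h2 := cv.2 (Set.mem_Ici.2 ha) (Set.mem_Ici.2 (by linarith : (0:ℝ) ≤ d))
      (by linarith : (0:ℝ) ≤ 1 - μ) hμ0 (by ring)
    simp only [smul_eq_mul] at h1 h2
    rw [← hb] at h1
    rw [← hc] at h2
    nlinarith [h1, h2]

lemma gset_eq {S X : Type*} [Fintype S] [DecidableEq X] (p : S → X → ℝ)
    (hp : ∀ s x, 0 < p s x) (W : Finset X) :
    gset p W = ∑ s, ((∑ x ∈ W, p s x * Real.log (p s x))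
      - (∑ x ∈ W, p s x) * Real.log (∑ x ∈ W, p s x)) := by
  unfold gset
  refine Finset.sum_congr rfl fun s _ => ?_
  rcases W.eq_empty_or_nonempty with rfl | hW
  · simp
  · have hP : 0 < ∑ y ∈ W, p s y := Finset.sum_pos (fun y _ => hp s y) hW
    rw [Finset.sum_mul, ← Finset.sum_sub_distrib]
    refine Finset.sum_congr rfl fun x hx => ?_
    rw [Real.log_div (hp s x).ne' hP.ne']
    ring

theorem gset_submodular_nonincreasing {S X : Type*} [Fintype S] [Fintype X] [DecidableEq X]
    (p : S → X → ℝ) (hp : ∀ s x, 0 < p s x) (hsum : ∑ s, ∑ x, p s x = 1) :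
    (∀ A B : Finset X, gset p (A ∪ B) + gset p (A ∩ B) ≤ gset p A + gset p B) ∧
    (∀ Y W : Finset X, Y ⊆ W → gset p W ≤ gset p Y) := by
  constructor
  · intro A B
    rw [gset_eq p hp, gset_eq p hp, gset_eq p hp, gset_eq p hp,
      ← Finset.sum_add_distrib, ← Finset.sum_add_distrib]
    refine Finset.sum_le_sum fun s _ => ?_
    have hmod : (∑ x ∈ A ∪ B, p s x * Real.log (p s x))
        + (∑ x ∈ A ∩ B, p s x * Real.log (p s x))
        = (∑ x ∈ A, p s x * Real.log (p s x)) + (∑ x ∈ B, p s x * Real.log (p s x)) :=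
      Finset.sum_union_inter
    have hmod2 : (∑ x ∈ A ∩ B, p s x) + (∑ x ∈ A ∪ B, p s x)
        = (∑ x ∈ A, p s x) + (∑ x ∈ B, p s x) := by
      rw [add_comm]; exact Finset.sum_union_inter
    have hkey := mul_log_submod
      (Finset.sum_nonneg fun x _ => (hp s x).le)
      (Finset.sum_le_sum_of_subset_of_nonneg (Finset.inter_subset_left)
        (fun x _ _ => (hp s x).le))
      (Finset.sum_le_sum_of_subset_of_nonneg (Finset.inter_subset_right)
        (fun x _ _ => (hp s x).le))
      hmod2
    linarith
  · intro Y W hYW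
    unfold gset
    refine Finset.sum_le_sum fun s _ => ?_
    rcases Y.eq_empty_or_nonempty with rfl | hY
    · simp only [Finset.sum_empty]
      rcases W.eq_empty_or_nonempty with rfl | hW
      · simp
      · have hP : 0 < ∑ y ∈ W, p s y := Finset.sum_pos (fun y _ => hp s y) hW
        refine Finset.sum_nonpos fun x hx => ?_
        refine mul_nonpos_of_nonneg_of_nonpos (hp s x).le ?_
        refine Real.log_nonpos ((div_pos (hp s x) hP).le) ?_
        rw [div_le_one hP]
        exact Finset.single_le_sum (fun y _ => (hp s y).le) hx
    · have hW : W.Nonempty := hY.mono hYW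
      have hPY : 0 < ∑ y ∈ Y, p s y := Finset.sum_pos (fun y _ => hp s y) hY
      have hPW : 0 < ∑ y ∈ W, p s y := Finset.sum_pos (fun y _ => hp s y) hW
      have hPle : (∑ y ∈ Y, p s y) ≤ ∑ y ∈ W, p s y :=
        Finset.sum_le_sum_of_subset_of_nonneg hYW (fun x _ _ => (hp s x).le)
      calc (∑ x ∈ W, p s x * Real.log (p s x / ∑ y ∈ W, p s y))
          ≤ ∑ x ∈ Y, p s x * Real.log (p s x / ∑ y ∈ W, p s y) := by
            have := Finset.sum_le_sum_of_subset_of_nonneg (f := fun x =>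
                -(p s x * Real.log (p s x / ∑ y ∈ W, p s y))) hYW ?_
            · simpa using this
            · intro x hx _
              refine neg_nonneg.2 (mul_nonpos_of_nonneg_of_nonpos (hp s x).le ?_)
              refine Real.log_nonpos ((div_pos (hp s x) hPW).le) ?_
              rw [div_le_one hPW]
              exact Finset.single_le_sum (fun y _ => (hp s y).le) hx
        _ ≤ ∑ x ∈ Y, p s x * Real.log (p s x / ∑ y ∈ Y, p s y) := by
            refine Finset.sum_le_sum fun x hx => ?_
            refine mul_le_mul_of_nonneg_left ?_ (hp s x).le
            refine Real.log_le_log ((div_pos (hp s x) hPW)) ?_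
            exact div_le_div_of_nonneg_left (hp s x).le hPY hPle
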